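/- Let X ⊆ ℝⁿ be a nonempty closed convex set, f₁ : ℝⁿ → ℝ convex, f₂ : ℝⁿ → ℝ convex and differentiable with L-Lipschitz continuous gradient, and F = f₁ + f₂ with nonempty optimal solution set X* over X and optimal value F*. Assume the local error bound property holds for this problem. Suppose (x^r) ⊆ X is generated by an APS method with error constant κ > 0 and stepsizes 0 < α̲ ≤ α_r ≤ ᾱ, and the sufficient decrease condition F(x^r) − F(x^{r+1}) ≥ c₁‖x^{r+1} − x^r‖² holds for some c₁ > 0 and all r. Then (x^r) converges R-linearly to an optimal solution: there exist x* ∈ closure(X*), C > 0, and ρ ∈ (0,1) such that ‖x^r − x*‖ ≤ C·ρ^r for all r. -/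

import Mathlib

set_option maxHeartbeats 1000000

open Set RealInnerProductSpace

/-- `p` is the proximal point `prox_φ(x, X)`: the minimizer over `y ∈ X` of
`φ(y) + (1/2)‖y − x‖²`. -/
def IsProx {E : Type*} [NormedAddCommGroup E] [InnerProductSpace ℝ E]
    (φ : E → ℝ) (X : Set E) (x p : E) : Prop :=
  p ∈ X ∧ ∀ y ∈ X, φ p + (1 / 2) * ‖p - x‖ ^ 2 ≤ φ y + (1 / 2) * ‖y - x‖ ^ 2

lemma small_t {A B : ℝ} (h : ∀ t : ℝ, 0 < t → t ≤ 1 → 0 ≤ A + t * B) : 0 ≤ A := by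
  rcases le_or_gt B 0 with hB | hB
  · have := h 1 one_pos le_rfl; nlinarith
  · by_contra hA
    push_neg at hA
    have ht : (0:ℝ) < min 1 (-A / (2 * B)) :=
      lt_min one_pos (div_pos (by linarith) (by linarith))
    have h1 := h _ ht (min_le_left _ _)
    have h2 : min 1 (-A / (2 * B)) * B ≤ (-A / (2 * B)) * B :=
      mul_le_mul_of_nonneg_right (min_le_right _ _) hB.le
    have h3 : (-A / (2 * B)) * B = -A / 2 := by field_simp
    nlinarith

lemma prox_VI {E : Type*} [NormedAddCommGroup E] [InnerProductSpace ℝ E]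
    {φ : E → ℝ} {X : Set E} {x p : E}
    (hφ : ConvexOn ℝ univ φ) (hX : Convex ℝ X) (h : IsProx φ X x p)
    {y : E} (hy : y ∈ X) : ⟪x - p, y - p⟫ ≤ φ y - φ p := by
  rw [show (⟪x - p, y - p⟫ ≤ φ y - φ p) ↔ 0 ≤ (φ y - φ p - ⟪x - p, y - p⟫) by
    constructor <;> intro <;> linarith]
  apply small_t (B := (1/2) * ‖y - p‖ ^ 2)
  intro t ht0 ht1
  have hz : p + t • (y - p) ∈ X := by
    have := hX h.1 hy (a := 1 - t) (b := t) (by linarith) ht0.le (by ring)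
    convert this using 1
    module
  have hkey := h.2 _ hz
  have hcv : φ (p + t • (y - p)) ≤ (1 - t) * φ p + t * φ y := by
    have := hφ.2 (mem_univ p) (mem_univ y) (by linarith : (0:ℝ) ≤ 1 - t) ht0.le (by ring)
    calc φ (p + t • (y - p)) = φ ((1-t) • p + t • y) := by congr 1; module
    _ ≤ (1 - t) * φ p + t * φ y := by simpa [smul_eq_mul] using this
  have hnorm : ‖p + t • (y - p) - x‖ ^ 2
      = ‖p - x‖ ^ 2 + 2 * t * ⟪p - x, y - p⟫ + t ^ 2 * ‖y - p‖ ^ 2 := by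
    have : p + t • (y - p) - x = (p - x) + t • (y - p) := by abel
    rw [this, norm_add_sq_real, real_inner_smul_right, norm_smul]
    simp [mul_pow, abs_of_nonneg ht0.le]
    ring
  rw [hnorm] at hkey
  have h4 : 0 ≤ t * (φ y - φ p) + t * ⟪p - x, y - p⟫ + (t^2/2) * ‖y - p‖^2 := by nlinarith
  have h5 : 0 ≤ (φ y - φ p) + ⟪p - x, y - p⟫ + (t/2) * ‖y - p‖^2 := by
    have := mul_le_mul_of_nonneg_left h4 (le_of_lt (inv_pos.mpr ht0))
    rw [mul_zero] at this
    calc (0:ℝ) ≤ t⁻¹ * (t * (φ y - φ p) + t * ⟪p - x, y - p⟫ + (t^2/2) * ‖y - p‖^2) := this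
    _ = (φ y - φ p) + ⟪p - x, y - p⟫ + (t/2) * ‖y - p‖^2 := by field_simp
  have heq : ⟪x - p, y - p⟫ = - ⟪p - x, y - p⟫ := by
    rw [← inner_neg_left]; congr 1; abel
  rw [heq]
  nlinarith

lemma grad_ineq {E : Type*} [NormedAddCommGroup E] [InnerProductSpace ℝ E] [CompleteSpace E]
    {f : E → ℝ} (hf : ConvexOn ℝ univ f) {z gz : E} (hg : HasGradientAt f gz z)
    (y : E) : ⟪gz, y - z⟫ ≤ f y - f z := by
  set v := y - z with hv
  have hγ : HasDerivAt (fun t : ℝ => z + t • v) v 0 := by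
    simpa using ((hasDerivAt_id (0:ℝ)).smul_const v).const_add z
  have hq : HasDerivAt (fun t : ℝ => f (z + t • v)) ⟪gz, v⟫ 0 := by
    have hz : z + (0:ℝ) • v = z := by simp
    have h1 := (hz ▸ hg.hasFDerivAt : HasFDerivAt f _ (z + (0:ℝ) • v)).comp_hasDerivAt 0 hγ
    simp at h1; exact h1
  have hslope := hasDerivAt_iff_tendsto_slope.mp hq
  have hslope' : Filter.Tendsto (slope (fun t : ℝ => f (z + t • v)) 0)
      (nhdsWithin 0 (Ioi 0)) (nhds ⟪gz, v⟫) :=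
    hslope.mono_left (nhdsWithin_mono 0 (fun t ht => ne_of_gt ht))
  refine le_of_tendsto hslope' ?_
  filter_upwards [Ioc_mem_nhdsGT one_pos] with t ht
  obtain ⟨ht0, ht1⟩ := ht
  have hcv : f (z + t • v) ≤ (1 - t) * f z + t * f y := by
    have := hf.2 (mem_univ z) (mem_univ y) (by linarith : (0:ℝ) ≤ 1 - t) ht0.le (by ring)
    calc f (z + t • v) = f ((1-t) • z + t • y) := by congr 1; rw [hv]; module
    _ ≤ (1 - t) * f z + t * f y := by simpa [smul_eq_mul] using this
  have hs : slope (fun t : ℝ => f (z + t • v)) 0 t = (f (z + t • v) - f z) / t := by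
    simp [slope_def_field]
  rw [hs, div_le_iff₀ ht0]
  nlinarith

lemma residual_bound {E : Type*} [NormedAddCommGroup E] [InnerProductSpace ℝ E]
    {a al κ : ℝ} (hal : 0 < al) (hala : al ≤ a) (hκ : 0 ≤ κ)
    {w dd er gr : E}
    (hcomb : ⟪-dd - a•gr - a•er, w - dd⟫ + a * ⟪-w - gr, dd - w⟫ ≤ 0)
    (her : ‖er‖ ≤ κ * ‖dd‖) : ‖w‖ ≤ (1 + 2/al + 2*κ) * ‖dd‖ := by
  have hexp : ⟪-dd - a•gr - a•er, w - dd⟫ + a * ⟪-w - gr, dd - w⟫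
      = a*‖w‖^2 - a*⟪w, dd⟫ - ⟪dd, w⟫ + ‖dd‖^2 - a*⟪er, w⟫ + a*⟪er, dd⟫ := by
    simp only [inner_sub_left, inner_sub_right, inner_neg_left, inner_add_left,
      inner_add_right, inner_neg_right, real_inner_smul_left, real_inner_smul_right,
      real_inner_self_eq_norm_sq]
    ring
  rw [hexp] at hcomb
  have ha : 0 < a := lt_of_lt_of_le hal hala
  have cs1 : ⟪w, dd⟫ ≤ ‖w‖ * ‖dd‖ := real_inner_le_norm w dd
  have cs2 : ⟪dd, w⟫ ≤ ‖dd‖ * ‖w‖ := real_inner_le_norm dd w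
  have cs3 : ⟪er, w⟫ ≤ ‖er‖ * ‖w‖ := real_inner_le_norm er w
  have cs4 : -⟪er, dd⟫ ≤ ‖er‖ * ‖dd‖ := by
    have := real_inner_le_norm (-er) dd
    simpa using this
  have hwn : 0 ≤ ‖w‖ := norm_nonneg w
  have hdn : 0 ≤ ‖dd‖ := norm_nonneg dd
  have hern : 0 ≤ ‖er‖ := norm_nonneg er
  -- a‖w‖² ≤ (a + 1 + aκ)‖w‖‖dd‖ + aκ‖dd‖²  (after bounding)
  have hC : (0:ℝ) ≤ 1 + 2/al + 2*κ := by positivity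
  rcases le_or_gt ‖w‖ ‖dd‖ with h | h
  · calc ‖w‖ ≤ 1 * ‖dd‖ := by linarith
    _ ≤ (1 + 2/al + 2*κ) * ‖dd‖ := by nlinarith [div_nonneg (by norm_num : (0:ℝ) ≤ 2) hal.le]
  · -- ‖w‖ > ‖dd‖ ≥ 0
    have hwpos : 0 < ‖w‖ := lt_of_le_of_lt hdn h
    have m1 : a * ⟪w, dd⟫ ≤ a * (‖w‖ * ‖dd‖) := mul_le_mul_of_nonneg_left cs1 ha.le
    have m3a : ‖er‖ * ‖w‖ ≤ κ * ‖dd‖ * ‖w‖ := mul_le_mul_of_nonneg_right her hwn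
    have m3 : a * ⟪er, w⟫ ≤ a * (κ * ‖dd‖ * ‖w‖) :=
      mul_le_mul_of_nonneg_left (le_trans cs3 m3a) ha.le
    have m4a : ‖er‖ * ‖dd‖ ≤ κ * ‖dd‖ * ‖dd‖ := mul_le_mul_of_nonneg_right her hdn
    have m4 : a * (-⟪er, dd⟫) ≤ a * (κ * ‖dd‖ * ‖dd‖) :=
      mul_le_mul_of_nonneg_left (le_trans cs4 m4a) ha.le
    have m5 : a * (κ * ‖dd‖ * ‖dd‖) ≤ a * (κ * ‖dd‖ * ‖w‖) :=
      mul_le_mul_of_nonneg_left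
        (mul_le_mul_of_nonneg_left h.le (mul_nonneg hκ hdn)) ha.le
    have hmain2 : a * ‖w‖^2 ≤ (a + 1 + 2*a*κ) * (‖w‖ * ‖dd‖) := by nlinarith
    have hw1 : a * ‖w‖ ≤ (a + 1 + 2*a*κ) * ‖dd‖ := by
      have := mul_le_mul_of_nonneg_left hmain2 (le_of_lt (inv_pos.mpr hwpos))
      calc a * ‖w‖ = ‖w‖⁻¹ * (a * ‖w‖^2) := by field_simp
      _ ≤ ‖w‖⁻¹ * ((a + 1 + 2*a*κ) * (‖w‖ * ‖dd‖)) := this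
      _ = (a + 1 + 2*a*κ) * ‖dd‖ := by field_simp
    have hdiv : 1 ≤ a / al := (one_le_div hal).mpr hala
    -- ‖w‖ ≤ (1 + 1/a + 2κ)‖dd‖ ≤ (1 + 2/al + 2κ)‖dd‖
    have h2a : (a + 1 + 2*a*κ) ≤ a * (1 + 2/al + 2*κ) := by
      have : a * (2/al) = 2 * (a/al) := by ring
      nlinarith
    have := mul_le_mul_of_nonneg_right h2a hdn
    have hfin : a * ‖w‖ ≤ a * ((1 + 2/al + 2*κ) * ‖dd‖) := by nlinarith
    exact le_of_mul_le_mul_left hfin ha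

/-- R-linear convergence of APS methods under the local error bound property and the
sufficient decrease condition.  Here `p z = prox_{f₁}(z − ∇f₂(z))`, so that the
residual is `ψ(z) = ‖z − p z‖`. -/
theorem aps_linear_convergence {n : ℕ}
    (X : Set (EuclideanSpace ℝ (Fin n)))
    (hXne : X.Nonempty) (hXcl : IsClosed X) (hXcv : Convex ℝ X)
    (f₁ f₂ : EuclideanSpace ℝ (Fin n) → ℝ)
    (hf₁ : ConvexOn ℝ univ f₁) (hf₂ : ConvexOn ℝ univ f₂)
    (g : EuclideanSpace ℝ (Fin n) → EuclideanSpace ℝ (Fin n))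
    (hg : ∀ z, HasGradientAt f₂ (g z) z)
    (L : ℝ) (hL : 0 ≤ L) (hLip : ∀ z w, ‖g z - g w‖ ≤ L * ‖z - w‖)
    (F : EuclideanSpace ℝ (Fin n) → ℝ) (hF : ∀ z, F z = f₁ z + f₂ z)
    (Xstar : Set (EuclideanSpace ℝ (Fin n)))
    (hXstar : Xstar = {y | y ∈ X ∧ ∀ z ∈ X, F y ≤ F z})
    (hXstarne : Xstar.Nonempty)
    (Fstar : ℝ) (hFstar : ∀ y ∈ Xstar, F y = Fstar)
    -- the residual map `p z = prox_{f₁}(z − ∇f₂(z))`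
    (p : EuclideanSpace ℝ (Fin n) → EuclideanSpace ℝ (Fin n))
    (hp : ∀ z, IsProx f₁ X (z - g z) (p z))
    -- local error bound property
    (hEB : ∀ ν : ℝ, sInf (F '' X) ≤ ν → ∃ δ > (0 : ℝ), ∃ τ > (0 : ℝ),
      ∀ z ∈ X, F z ≤ ν → ‖z - p z‖ ≤ δ →
        Metric.infDist z (closure Xstar) ≤ τ * ‖z - p z‖)
    (κ : ℝ) (hκ : 0 < κ)
    (α : ℕ → ℝ) (αlo αhi : ℝ) (hαlo : 0 < αlo)
    (hα₁ : ∀ r, αlo ≤ α r) (hα₂ : ∀ r, α r ≤ αhi)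
    (x e : ℕ → EuclideanSpace ℝ (Fin n)) (hxX : ∀ r, x r ∈ X)
    (hAPS : ∀ r, IsProx (fun y => α r * f₁ y) X
      (x r - α r • (g (x r) + e r)) (x (r + 1)))
    (herr : ∀ r, ‖e r‖ ≤ κ * ‖x (r + 1) - x r‖)
    (c₁ : ℝ) (hc₁ : 0 < c₁)
    (hdec : ∀ r, F (x r) - F (x (r + 1)) ≥ c₁ * ‖x (r + 1) - x r‖ ^ 2) :
    ∃ xstar ∈ closure Xstar, ∃ C > (0 : ℝ), ∃ ρ ∈ Set.Ioo (0 : ℝ) 1,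
      ∀ r, ‖x r - xstar‖ ≤ C * ρ ^ r := by
  classical
  obtain ⟨ystar, hystar⟩ := hXstarne
  have hXsX : Xstar ⊆ X := by rw [hXstar]; exact fun y hy => hy.1
  have hFlow : ∀ z ∈ X, Fstar ≤ F z := by
    intro z hz
    rw [← hFstar ystar hystar]
    exact (hXstar ▸ hystar : ystar ∈ {y | y ∈ X ∧ ∀ z ∈ X, F y ≤ F z}).2 z hz
  have hαpos : ∀ r, 0 < α r := fun r => lt_of_lt_of_le hαlo (hα₁ r)
  have hconva : ∀ r, ConvexOn ℝ univ (fun y => α r * f₁ y) := by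
    intro r
    simpa [smul_eq_mul] using hf₁.smul (hαpos r).le
  -- continuity and closedness of Xstar
  have hf₁c : Continuous f₁ := by
    rw [← continuousOn_univ]
    exact hf₁.continuousOn isOpen_univ
  have hf₂c : Continuous f₂ := by
    rw [continuous_iff_continuousAt]
    exact fun z => (hg z).hasFDerivAt.differentiableAt.continuousAt
  have hFc : Continuous F := by
    have : F = fun z => f₁ z + f₂ z := funext hF
    rw [this]; exact hf₁c.add hf₂c
  have hXscl : IsClosed Xstar := by
    rw [hXstar, show {y | y ∈ X ∧ ∀ z ∈ X, F y ≤ F z}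
        = X ∩ ⋂ z ∈ X, {y | F y ≤ F z} by ext y; simp]
    exact hXcl.inter (isClosed_biInter fun z _ => isClosed_le hFc continuous_const)
  have hclos : closure Xstar = Xstar := hXscl.closure_eq
  -- notation
  set d : ℕ → EuclideanSpace ℝ (Fin n) := fun r => x (r+1) - x r with hd
  set D : ℕ → ℝ := fun r => F (x r) - Fstar with hDdef
  have hD0 : ∀ r, 0 ≤ D r := fun r => sub_nonneg.mpr (hFlow _ (hxX r))
  have hDdec : ∀ r, c₁ * ‖d r‖^2 ≤ D r - D (r+1) := by
    intro r; have := hdec r; simp only [hDdef, hd]; linarith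
  have hDmono : ∀ r, D (r+1) ≤ D r := by
    intro r; nlinarith [hDdec r, sq_nonneg ‖d r‖]
  have hDle0 : ∀ r, D r ≤ D 0 := by
    intro r
    induction r with
    | zero => exact le_rfl
    | succ k ih => exact le_trans (hDmono k) ih
  -- residual bound
  set C₂ : ℝ := 1 + 2/αlo + 2*κ with hC₂def
  have hC₂pos : 0 < C₂ := by positivity
  have hres : ∀ r, ‖x r - p (x r)‖ ≤ C₂ * ‖d r‖ := by
    intro r
    have hapos : 0 < α r := hαpos r
    have hVI1 : ⟪(x r - α r • (g (x r) + e r)) - x (r+1), p (x r) - x (r+1)⟫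
        ≤ α r * f₁ (p (x r)) - α r * f₁ (x (r+1)) :=
      prox_VI (hconva r) hXcv (hAPS r) (hp (x r)).1
    have hVI2 : ⟪(x r - g (x r)) - p (x r), x (r+1) - p (x r)⟫
        ≤ f₁ (x (r+1)) - f₁ (p (x r)) :=
      prox_VI hf₁ hXcv (hp (x r)) (hAPS r).1
    set a := α r with hadef
    set w := p (x r) - x r with hwdef
    have hcomb : ⟪-(d r) - a • (g (x r)) - a • (e r), w - d r⟫
        + a * ⟪-w - g (x r), d r - w⟫ ≤ 0 := by
      have hc1 : (⟪-(d r) - a • (g (x r)) - a • (e r), w - d r⟫ : ℝ)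
          = ⟪(x r - a • (g (x r) + e r)) - x (r+1), p (x r) - x (r+1)⟫ := by
        congr 1 <;> simp only [hd, hwdef] <;> module
      have hc2 : (⟪-w - g (x r), d r - w⟫ : ℝ)
          = ⟪(x r - g (x r)) - p (x r), x (r+1) - p (x r)⟫ := by
        congr 1 <;> simp only [hd, hwdef] <;> module
      have hVI2' : a * ⟪(x r - g (x r)) - p (x r), x (r+1) - p (x r)⟫
          ≤ a * (f₁ (x (r+1)) - f₁ (p (x r))) :=
        mul_le_mul_of_nonneg_left hVI2 hapos.le
      have hring : a * (f₁ (x (r+1)) - f₁ (p (x r)))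
          = a * f₁ (x (r+1)) - a * f₁ (p (x r)) := by ring
      rw [hc1, hc2]
      linarith
    have her : ‖e r‖ ≤ κ * ‖d r‖ := by simpa [hd] using herr r
    have hrb := residual_bound hαlo (hα₁ r) hκ.le hcomb her
    calc ‖x r - p (x r)‖ = ‖w‖ := by rw [hwdef, norm_sub_rev]
    _ ≤ (1 + 2/αlo + 2*κ) * ‖d r‖ := hrb
    _ = C₂ * ‖d r‖ := by rw [hC₂def]
  -- cost-to-go
  set K : ℝ := 1/αlo + L + κ with hKdef
  have hKpos : 0 < K := by positivity
  have hcost : ∀ r, F (x (r+1)) - Fstar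
      ≤ K * (‖d r‖ * (Metric.infDist (x r) Xstar + ‖d r‖)) := by
    intro r
    obtain ⟨xb, hxbmem, hxbd⟩ := hXscl.exists_infDist_eq_dist ⟨ystar, hystar⟩ (x r)
    have hxbX : xb ∈ X := hXsX hxbmem
    have hapos : 0 < α r := hαpos r
    have hVI1 : ⟪(x r - α r • (g (x r) + e r)) - x (r+1), xb - x (r+1)⟫
        ≤ α r * f₁ xb - α r * f₁ (x (r+1)) :=
      prox_VI (hconva r) hXcv (hAPS r) hxbX
    set a := α r with hadef
    have hgrad : ⟪g (x (r+1)), xb - x (r+1)⟫ ≤ f₂ xb - f₂ (x (r+1)) :=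
      grad_ineq hf₂ (hg (x (r+1))) xb
    set vv := d r + a • (g (x r) - g (x (r+1)) + e r) with hvv
    have hiden : (⟪vv, xb - x (r+1)⟫ : ℝ)
        = -(⟪(x r - a • (g (x r) + e r)) - x (r+1), xb - x (r+1)⟫)
          - a * ⟪g (x (r+1)), xb - x (r+1)⟫ := by
      have hv : vv = -((x r - a • (g (x r) + e r)) - x (r+1)) - a • g (x (r+1)) := by
        simp only [hvv, hd]; module
      rw [hv, inner_sub_left, inner_neg_left, real_inner_smul_left]
    have h5 : a * (F (x (r+1)) - Fstar) ≤ ⟪vv, xb - x (r+1)⟫ := by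
      have e1 : a * (F (x (r+1)) - Fstar)
          = (a * f₁ (x (r+1)) - a * f₁ xb) + (a * f₂ (x (r+1)) - a * f₂ xb) := by
        rw [hF (x (r+1)), ← hFstar xb hxbmem, hF xb]; ring
      have e2 : a * ⟪g (x (r+1)), xb - x (r+1)⟫ ≤ a * f₂ xb - a * f₂ (x (r+1)) := by
        have e2a := mul_le_mul_of_nonneg_left hgrad hapos.le
        have e2b : a * (f₂ xb - f₂ (x (r+1))) = a * f₂ xb - a * f₂ (x (r+1)) := by ring
        linarith
      rw [hiden, e1]
      linarith
    have hq : ‖xb - x (r+1)‖ ≤ Metric.infDist (x r) Xstar + ‖d r‖ := by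
      have hq1 : xb - x (r+1) = (xb - x r) - d r := by simp only [hd]; abel
      rw [hq1]
      have h1 := norm_sub_le (xb - x r) (d r)
      have h2 : ‖xb - x r‖ = Metric.infDist (x r) Xstar := by
        rw [hxbd, dist_eq_norm, norm_sub_rev]
      linarith
    have hvvn : ‖vv‖ ≤ (1 + a*(L + κ)) * ‖d r‖ := by
      have h1 : ‖vv‖ ≤ ‖d r‖ + ‖a • (g (x r) - g (x (r+1)) + e r)‖ := norm_add_le _ _
      have h2 : ‖a • (g (x r) - g (x (r+1)) + e r)‖
          = a * ‖g (x r) - g (x (r+1)) + e r‖ := by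
        rw [norm_smul, Real.norm_eq_abs, abs_of_pos hapos]
      have h3 : ‖g (x r) - g (x (r+1)) + e r‖ ≤ (L + κ) * ‖d r‖ := by
        have h4 := norm_add_le (g (x r) - g (x (r+1))) (e r)
        have h5' := hLip (x r) (x (r+1))
        have h6 : ‖x r - x (r+1)‖ = ‖d r‖ := by simp only [hd]; rw [norm_sub_rev]
        have h7 : ‖e r‖ ≤ κ * ‖d r‖ := by simpa [hd] using herr r
        rw [h6] at h5'
        linarith
      have h8 := mul_le_mul_of_nonneg_left h3 hapos.le
      rw [h2] at h1
      nlinarith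
    have h8 : (⟪vv, xb - x (r+1)⟫ : ℝ)
        ≤ ((1 + a*(L+κ)) * ‖d r‖) * (Metric.infDist (x r) Xstar + ‖d r‖) := by
      refine le_trans (real_inner_le_norm _ _) ?_
      apply mul_le_mul hvvn hq (norm_nonneg _)
      have : (0:ℝ) ≤ a*(L+κ) := mul_nonneg hapos.le (by positivity)
      positivity
    have h9 : a * (F (x (r+1)) - Fstar)
        ≤ a * (K * (‖d r‖ * (Metric.infDist (x r) Xstar + ‖d r‖))) := by
      have hdiv : 1 ≤ a / αlo := (one_le_div hαlo).mpr (hα₁ r)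
      have hKa : a * K = a/αlo + a*L + a*κ := by rw [hKdef]; ring
      have hN : (0:ℝ) ≤ ‖d r‖ * (Metric.infDist (x r) Xstar + ‖d r‖) :=
        mul_nonneg (norm_nonneg _) (add_nonneg Metric.infDist_nonneg (norm_nonneg _))
      have hprod : (0:ℝ) ≤ (a/αlo - 1) * (‖d r‖ * (Metric.infDist (x r) Xstar + ‖d r‖)) :=
        mul_nonneg (by linarith) hN
      have hKaN : a * (K * (‖d r‖ * (Metric.infDist (x r) Xstar + ‖d r‖)))
          = (a/αlo + a*L + a*κ) * (‖d r‖ * (Metric.infDist (x r) Xstar + ‖d r‖)) := by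
        rw [← hKa]; ring
      rw [hKaN]
      nlinarith [h5, h8]
    exact le_of_mul_le_mul_left h9 hapos
  -- d → 0
  have hsum : Summable (fun r => ‖d r‖^2) := by
    apply summable_of_sum_range_le (c := D 0 / c₁) (fun r => sq_nonneg _)
    intro m
    have htel : ∑ i ∈ Finset.range m, (D i - D (i+1)) = D 0 - D m := Finset.sum_range_sub' D m
    have hle : c₁ * ∑ i ∈ Finset.range m, ‖d i‖^2 ≤ D 0 - D m := by
      rw [Finset.mul_sum, ← htel]
      exact Finset.sum_le_sum fun i _ => hDdec i
    have := hD0 m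
    rw [le_div_iff₀ hc₁]
    nlinarith
  have hdto0 : Filter.Tendsto (fun r => ‖d r‖^2) Filter.atTop (nhds 0) :=
    hsum.tendsto_atTop_zero
  -- error bound constants
  have hBdd : BddBelow (F '' X) := ⟨Fstar, fun v ⟨z, hz, hzv⟩ => hzv ▸ hFlow z hz⟩
  have hinf_le : sInf (F '' X) ≤ F (x 0) := csInf_le hBdd (mem_image_of_mem F (hxX 0))
  obtain ⟨δ, hδ, τ, hτ, hEB'⟩ := hEB (F (x 0)) hinf_le
  obtain ⟨R, hR⟩ : ∃ R, ∀ r ≥ R, ‖d r‖^2 < (δ/C₂)^2 := by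
    have h := hdto0.eventually (gt_mem_nhds (by positivity : (0:ℝ) < (δ/C₂)^2))
    rw [Filter.eventually_atTop] at h
    obtain ⟨R, hR⟩ := h
    exact ⟨R, fun r hr => hR r hr⟩
  have hdsmall : ∀ r ≥ R, ‖d r‖ ≤ δ / C₂ := by
    intro r hr
    nlinarith [hR r hr, norm_nonneg (d r), div_pos hδ hC₂pos]
  have hφbound : ∀ r ≥ R, Metric.infDist (x r) Xstar ≤ τ * C₂ * ‖d r‖ := by
    intro r hr
    have hψ : ‖x r - p (x r)‖ ≤ δ := by
      calc ‖x r - p (x r)‖ ≤ C₂ * ‖d r‖ := hres r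
      _ ≤ C₂ * (δ / C₂) := by
        exact mul_le_mul_of_nonneg_left (hdsmall r hr) hC₂pos.le
      _ = δ := by field_simp
    have hFxr : F (x r) ≤ F (x 0) := by have := hDle0 r; simp only [hDdef] at this; linarith
    have := hEB' (x r) (hxX r) hFxr hψ
    rw [hclos] at this
    calc Metric.infDist (x r) Xstar ≤ τ * ‖x r - p (x r)‖ := this
    _ ≤ τ * (C₂ * ‖d r‖) := mul_le_mul_of_nonneg_left (hres r) hτ.le
    _ = τ * C₂ * ‖d r‖ := by ring
  -- linear decay of D
  set M : ℝ := τ * C₂ with hMdef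
  set C₃ : ℝ := K * (M + 1) with hC₃def
  have hMpos : 0 < M := mul_pos hτ hC₂pos
  have hC₃pos : 0 < C₃ := by positivity
  have hkey : ∀ r ≥ R, D (r+1) ≤ C₃ * ‖d r‖^2 := by
    intro r hr
    have h1 := hcost r
    have h2 := hφbound r hr
    have hdn : (0:ℝ) ≤ ‖d r‖ := norm_nonneg _
    have h4 : Metric.infDist (x r) Xstar + ‖d r‖ ≤ (M + 1) * ‖d r‖ := by linarith
    calc D (r+1) = F (x (r+1)) - Fstar := rfl
    _ ≤ K * (‖d r‖ * (Metric.infDist (x r) Xstar + ‖d r‖)) := h1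
    _ ≤ K * (‖d r‖ * ((M + 1) * ‖d r‖)) := by
        apply mul_le_mul_of_nonneg_left _ hKpos.le
        exact mul_le_mul_of_nonneg_left h4 hdn
    _ = C₃ * ‖d r‖^2 := by rw [hC₃def]; ring
  set θ : ℝ := C₃ / (c₁ + C₃) with hθdef
  have hθpos : 0 < θ := by positivity
  have hθlt : θ < 1 := by
    rw [div_lt_one (by positivity)]; linarith
  have hgeo : ∀ k, D (R + k) ≤ θ^k * D R := by
    intro k
    induction k with
    | zero => simp
    | succ m ih =>
      have hrm : R + m ≥ R := Nat.le_add_right R m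
      have h1 := hkey (R + m) hrm
      have h2 := hDdec (R + m)
      have hstep : D (R + m + 1) ≤ θ * D (R + m) := by
        rw [hθdef, div_mul_eq_mul_div, le_div_iff₀ (by positivity)]
        nlinarith
      calc D (R + (m+1)) = D (R + m + 1) := by ring_nf
      _ ≤ θ * D (R + m) := hstep
      _ ≤ θ * (θ^m * D R) := mul_le_mul_of_nonneg_left ih hθpos.le
      _ = θ^(m+1) * D R := by ring
  set ρ : ℝ := Real.sqrt θ with hρdef
  have hρpos : 0 < ρ := Real.sqrt_pos.mpr hθpos
  have hρlt : ρ < 1 := by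
    rw [hρdef, show (1:ℝ) = Real.sqrt 1 by simp]
    exact Real.sqrt_lt_sqrt hθpos.le hθlt
  have hρsq : ρ^2 = θ := Real.sq_sqrt hθpos.le
  set A : ℝ := Real.sqrt (D R / c₁) with hAdef
  have hA0 : 0 ≤ A := Real.sqrt_nonneg _
  have hAsq : A^2 = D R / c₁ := Real.sq_sqrt (div_nonneg (hD0 R) hc₁.le)
  have hdk : ∀ k, ‖d (R + k)‖ ≤ A * ρ^k := by
    intro k
    have h1 : c₁ * ‖d (R + k)‖^2 ≤ D (R + k) := by
      have := hDdec (R + k); have := hD0 (R + k + 1); linarith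
    have h2 : ‖d (R + k)‖^2 ≤ (A * ρ^k)^2 := by
      have heq : (A * ρ^k)^2 = (D R / c₁) * θ^k := by
        rw [← hAsq, ← hρsq]; ring
      rw [heq]
      have h3 := hgeo k
      rw [div_mul_eq_mul_div, le_div_iff₀ hc₁]
      nlinarith
    nlinarith [norm_nonneg (d (R + k)), mul_nonneg hA0 (pow_nonneg hρpos.le k)]
  set S : ℝ := ∑ j ∈ Finset.range R, ‖d j‖ / ρ^j with hSdef
  have hS0 : 0 ≤ S := Finset.sum_nonneg fun j _ => by positivity
  set B : ℝ := A / ρ^R + S with hBdef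
  have hB0 : 0 ≤ B := add_nonneg (by positivity) hS0
  have hgB : ∀ j, ‖d j‖ ≤ B * ρ^j := by
    intro j
    rcases lt_or_ge j R with hj | hj
    · have hterm : ‖d j‖ / ρ^j ≤ B := by
        rw [hBdef]
        have h1 : ‖d j‖ / ρ^j ≤ S := by
          rw [hSdef]
          exact Finset.single_le_sum (f := fun i => ‖d i‖ / ρ^i)
            (fun i _ => by positivity) (Finset.mem_range.mpr hj)
        have h2 : (0:ℝ) ≤ A / ρ^R := by positivity
        linarith
      calc ‖d j‖ = (‖d j‖ / ρ^j) * ρ^j := by field_simp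
      _ ≤ B * ρ^j := mul_le_mul_of_nonneg_right hterm (by positivity)
    · obtain ⟨k, rfl⟩ := Nat.exists_eq_add_of_le hj
      have h1 := hdk k
      have h2 : A * ρ^k ≤ B * ρ^(R+k) := by
        have hρR : (ρ:ℝ)^R ≠ 0 := by positivity
        have he : B * ρ^(R+k) = A * ρ^k + S * ρ^(R+k) := by
          rw [hBdef, add_mul, pow_add]
          field_simp
        rw [he]
        have : (0:ℝ) ≤ S * ρ^(R+k) := mul_nonneg hS0 (by positivity)
        linarith
      linarith
  have hdist : ∀ m, dist (x m) (x (m+1)) ≤ B * ρ^m := by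
    intro m
    rw [dist_eq_norm, ← norm_neg]
    have : -(x m - x (m+1)) = d m := by simp [hd]
    rw [this]
    exact hgB m
  have hcauchy : CauchySeq x := cauchySeq_of_le_geometric ρ B hρlt hdist
  obtain ⟨xstar, hxstar⟩ := cauchySeq_tendsto_of_complete hcauchy
  have hlim : ∀ m, dist (x m) xstar ≤ B * ρ^m / (1 - ρ) :=
    fun m => dist_le_of_le_geometric_of_tendsto ρ B hρlt hdist hxstar m
  -- xstar is optimal
  have hmem : xstar ∈ Xstar := by
    rw [hXscl.mem_iff_infDist_zero ⟨ystar, hystar⟩]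
    have hle : ∀ r ≥ R, Metric.infDist xstar Xstar
        ≤ (τ * C₂ * B + B / (1 - ρ)) * ρ^r := by
      intro r hr
      calc Metric.infDist xstar Xstar
          ≤ Metric.infDist (x r) Xstar + dist xstar (x r) :=
            Metric.infDist_le_infDist_add_dist
      _ ≤ τ * C₂ * ‖d r‖ + dist (x r) xstar := by
          rw [dist_comm]; exact add_le_add_left (hφbound r hr) _
      _ ≤ τ * C₂ * (B * ρ^r) + B * ρ^r / (1 - ρ) := by
          apply add_le_add _ (hlim r)
          exact mul_le_mul_of_nonneg_left (hgB r) (by positivity)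
      _ = (τ * C₂ * B + B / (1 - ρ)) * ρ^r := by ring
    have htend : Filter.Tendsto (fun r => (τ * C₂ * B + B / (1 - ρ)) * ρ^r)
        Filter.atTop (nhds 0) := by
      have := tendsto_pow_atTop_nhds_zero_of_lt_one hρpos.le hρlt
      simpa using this.const_mul (τ * C₂ * B + B / (1 - ρ))
    have h0 : Metric.infDist xstar Xstar ≤ 0 := by
      apply ge_of_tendsto htend
      filter_upwards [Filter.eventually_ge_atTop R] with r hr using hle r hr
    exact le_antisymm h0 Metric.infDist_nonneg
  refine ⟨xstar, by rw [hclos]; exact hmem, B / (1 - ρ) + 1,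
    by have : 0 ≤ B/(1-ρ) := div_nonneg hB0 (by linarith); linarith, ρ,
    ⟨hρpos, hρlt⟩, ?_⟩
  intro r
  rw [← dist_eq_norm]
  calc dist (x r) xstar ≤ B * ρ^r / (1 - ρ) := hlim r
  _ ≤ (B / (1 - ρ) + 1) * ρ^r := by
      rw [mul_div_right_comm]
      have : (0:ℝ) < ρ^r := by positivity
      nlinarith [div_nonneg hB0 (by linarith : (0:ℝ) ≤ 1 - ρ)]
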